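/- The derived vector of the geometric class G_{l_1} S T_{k_0} G_{l_0} (with l_1 ≥ 2, k_0 ≥ 0, l_0 ≥ 0), computed by starting from d^1 = (1), d^2 = (1,1) and applying G l_1 − 2 times, then S once, then T k_0 times, then G l_0 times, equals the sequence consisting of 2 + k_0 + l_0 entries equal to 1 followed by l_1 − 1 entries equal to 2 + k_0. -/

import Mathlib

def opG (α : List ℕ) : List ℕ := 1 :: α

def opS (α β : List ℕ) : List ℕ := 1 :: 1 :: List.zipWith (· + ·) α β.tail

def opT (α β : List ℕ) : List ℕ :=
  1 :: 1 :: List.zipWith (fun a b => 2*b - a) α β.tail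

def stepG (p : List ℕ × List ℕ) : List ℕ × List ℕ := (p.2, opG p.2)
def stepS (p : List ℕ × List ℕ) : List ℕ × List ℕ := (p.2, opS p.1 p.2)
def stepT (p : List ℕ × List ℕ) : List ℕ × List ℕ := (p.2, opT p.1 p.2)

lemma zipWith_rep_rep (f : ℕ → ℕ → ℕ) (n m : ℕ) (a b c d : ℕ) :
    List.zipWith f (List.replicate n a ++ List.replicate m b)
      (List.replicate n c ++ List.replicate m d)
      = List.replicate n (f a c) ++ List.replicate m (f b d) := by
  rw [List.zipWith_append (by simp)]
  simp [List.zipWith_replicate]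

lemma stepG_iter_init (n : ℕ) :
    stepG^[n] ([1], [1, 1]) = (List.replicate (n+1) 1, List.replicate (n+2) 1) := by
  induction n with
  | zero => rfl
  | succ n ih =>
      rw [Function.iterate_succ_apply', ih]
      simp [stepG, opG, List.replicate_succ]

lemma stepT_iter (m j : ℕ) :
    stepT^[j] (List.replicate 1 1 ++ List.replicate (m+1) 1,
               List.replicate 2 1 ++ List.replicate (m+1) 2)
      = (List.replicate (j+1) 1 ++ List.replicate (m+1) (j+1),
         List.replicate (j+2) 1 ++ List.replicate (m+1) (j+2)) := by
  induction j with
  | zero => rfl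
  | succ j ih =>
      rw [Function.iterate_succ_apply', ih]
      simp only [stepT, opT]
      have htail : (List.replicate (j+2) 1 ++ List.replicate (m+1) (j+2)).tail
          = List.replicate (j+1) 1 ++ List.replicate (m+1) (j+2) := by
        simp [List.replicate_succ]
      rw [htail, zipWith_rep_rep]
      refine Prod.ext rfl ?_
      · have : 2 * (j + 2) - (j + 1) = j + 3 := by omega
        simp [this, List.replicate_succ]

lemma stepG_iter_snd (n : ℕ) (p : List ℕ × List ℕ) :
    (stepG^[n] p).2 = List.replicate n 1 ++ p.2 := by
  induction n with
  | zero => rfl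
  | succ n ih =>
      rw [Function.iterate_succ_apply']
      simp [stepG, opG, ih, List.replicate_succ]

/-- The derived vector of the class `G_{l₁} S T_{k₀} G_{l₀}` (with `l₁ ≥ 2`):
`2 + k₀ + l₀` ones followed by `l₁ − 1` copies of `2 + k₀`. -/
theorem derived_GSTG (l₁ k₀ l₀ : ℕ) (hl₁ : 2 ≤ l₁) :
    (stepG^[l₀] (stepT^[k₀] (stepS (stepG^[l₁-2] ([1], [1, 1]))))).2
      = List.replicate (2+k₀+l₀) 1 ++ List.replicate (l₁-1) (2+k₀) := by
  obtain ⟨m, rfl⟩ : ∃ m, l₁ = m + 2 := ⟨l₁ - 2, by omega⟩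
  have h1 : stepS (stepG^[m+2-2] ([1], [1, 1]))
      = (List.replicate (m+2) 1,
         List.replicate 2 1 ++ List.replicate (m+1) 2) := by
    have : m + 2 - 2 = m := rfl
    rw [this, stepG_iter_init]
    simp only [stepS, opS]
    have htail : (List.replicate (m+2) 1).tail = List.replicate (m+1) 1 := by
      simp [List.replicate_succ]
    rw [htail]
    refine Prod.ext rfl ?_
    · have : List.zipWith (· + ·) (List.replicate (m+1) 1) (List.replicate (m+1) 1)
          = List.replicate (m+1) 2 := by
        rw [List.zipWith_replicate]; simp
      rw [this]
      simp [List.replicate_succ]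
  rw [h1]
  have h2 : List.replicate (m+2) (1:ℕ) = List.replicate 1 1 ++ List.replicate (m+1) 1 := by
    simp [List.replicate_succ]
  rw [h2, stepT_iter, stepG_iter_snd]
  have : m + 2 - 1 = m + 1 := rfl
  rw [this]
  simp only []
  rw [← List.append_assoc, ← List.replicate_add]
  congr 2 <;> omega
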